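/- Let W ∈ ℝ^{V×V} be a nonnegative row-stochastic matrix and Λ = I − diag(W), where diag(W) is the diagonal matrix of the diagonal entries of W. Assume that in the graph associated to W (edge (i,j) whenever W_{ij} > 0), for every node ℓ there exists a directed path from ℓ to some node i with W_{ii} > 0. Then ΛW is Schur stable, I − ΛW is invertible, and for every v ∈ ℝ^{V} the opinion dynamics x(k+1) = ΛW x(k) + (I − Λ) v with x(0) = v converges, as k → ∞, to x′ = (I − ΛW)^{-1} (I − Λ) v. -/

import Mathlib

open Matrix Filter

section Aux

variable {V : Type*} [Fintype V] [DecidableEq V]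

private lemma aux_pow_nonneg (A : Matrix V V ℝ) (h0 : ∀ i j, 0 ≤ A i j) :
    ∀ (k : ℕ) (i j : V), 0 ≤ (A ^ k) i j := by
  intro k
  induction k with
  | zero => intro i j; rw [pow_zero]; by_cases h : i = j <;> simp [Matrix.one_apply, h]
  | succ k ih =>
      intro i j
      rw [pow_succ, Matrix.mul_apply]
      exact Finset.sum_nonneg fun l _ => mul_nonneg (ih i l) (h0 l j)

private lemma aux_rowsum_succ (A : Matrix V V ℝ) (k : ℕ) (i : V) :
    ∑ j, (A ^ (k + 1)) i j = ∑ l, A i l * ∑ j, (A ^ k) l j := by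
  rw [pow_succ']
  simp only [Matrix.mul_apply, Finset.mul_sum]
  rw [Finset.sum_comm]

private lemma aux_rowsum_le_one (A : Matrix V V ℝ) (h0 : ∀ i j, 0 ≤ A i j)
    (h1 : ∀ i, ∑ j, A i j ≤ 1) : ∀ (k : ℕ) (i : V), ∑ j, (A ^ k) i j ≤ 1 := by
  intro k
  induction k with
  | zero => intro i; rw [pow_zero]; simp [Matrix.one_apply]
  | succ k ih =>
      intro i
      rw [aux_rowsum_succ]
      calc ∑ l, A i l * ∑ j, (A ^ k) l j ≤ ∑ l, A i l * 1 := by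
            refine Finset.sum_le_sum fun l _ => mul_le_mul_of_nonneg_left (ih l) (h0 i l)
        _ ≤ 1 := by simpa using h1 i

private lemma aux_rowsum_nonneg (A : Matrix V V ℝ) (h0 : ∀ i j, 0 ≤ A i j)
    (k : ℕ) (i : V) : 0 ≤ ∑ j, (A ^ k) i j :=
  Finset.sum_nonneg fun j _ => aux_pow_nonneg A h0 k i j

private lemma aux_rowsum_anti (A : Matrix V V ℝ) (h0 : ∀ i j, 0 ≤ A i j)
    (h1 : ∀ i, ∑ j, A i j ≤ 1) (i : V) :
    Antitone (fun k => ∑ j, (A ^ k) i j) := by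
  have hstep : ∀ (k : ℕ) (i : V), ∑ j, (A ^ (k + 1)) i j ≤ ∑ j, (A ^ k) i j := by
    intro k
    induction k with
    | zero =>
        intro i
        rw [aux_rowsum_succ]
        calc ∑ l, A i l * ∑ j, (A ^ 0) l j ≤ ∑ l, A i l * 1 := by
              refine Finset.sum_le_sum fun l _ =>
                mul_le_mul_of_nonneg_left (aux_rowsum_le_one A h0 h1 0 l) (h0 i l)
          _ ≤ 1 := by simpa using h1 i
          _ = ∑ j, (A ^ 0) i j := by rw [pow_zero]; simp [Matrix.one_apply]
    | succ k ih =>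
        intro i
        rw [aux_rowsum_succ, aux_rowsum_succ]
        exact Finset.sum_le_sum fun l _ => mul_le_mul_of_nonneg_left (ih l) (h0 i l)
  exact antitone_nat_of_succ_le fun k => hstep k i

/-- Eigenvalue bound: if some power of a nonnegative matrix has all row sums `< 1`,
then every (complex) eigenvalue has modulus `< 1`. -/
private lemma aux_eig [Nonempty V] (A : Matrix V V ℝ) (h0 : ∀ i j, 0 ≤ A i j)
    (N : ℕ) (hN : ∀ i, ∑ j, (A ^ N) i j < 1)
    (μ : ℂ) (x : V → ℂ) (hx : x ≠ 0)
    (hBx : (A.map Complex.ofReal).mulVec x = μ • x) : ‖μ‖ < 1 := by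
  have hBpow : ∀ k : ℕ, (A ^ k).map Complex.ofReal = (A.map Complex.ofReal) ^ k := by
    intro k
    have : (Complex.ofRealHom.mapMatrix : Matrix V V ℝ →+* Matrix V V ℂ) (A ^ k)
        = ((Complex.ofRealHom.mapMatrix : Matrix V V ℝ →+* Matrix V V ℂ) A) ^ k :=
      map_pow _ _ _
    exact this
  have heig : ∀ k : ℕ, ((A.map Complex.ofReal) ^ k).mulVec x = μ ^ k • x := by
    intro k
    induction k with
    | zero => simp [Matrix.one_mulVec]
    | succ k ih =>
        rw [pow_succ', ← Matrix.mulVec_mulVec, ih, Matrix.mulVec_smul, hBx,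
          smul_smul, ← pow_succ]
  obtain ⟨i, -, hi⟩ := Finset.exists_max_image Finset.univ
    (fun j => ‖x j‖) Finset.univ_nonempty
  have hxi : 0 < ‖x i‖ := by
    obtain ⟨j, hj⟩ := Function.ne_iff.mp hx
    calc (0 : ℝ) < ‖x j‖ := by
          simpa using (norm_pos_iff.mpr (by simpa using hj))
      _ ≤ ‖x i‖ := hi j (Finset.mem_univ j)
  have h1 : ((A.map Complex.ofReal) ^ N).mulVec x i = μ ^ N * x i := by
    rw [heig N]; simp
  have h2 : ‖((A.map Complex.ofReal) ^ N).mulVec x i‖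
      ≤ (∑ j, (A ^ N) i j) * ‖x i‖ := by
    rw [← hBpow N, Matrix.mulVec]
    calc ‖∑ j, ((A ^ N).map Complex.ofReal) i j * x j‖
        ≤ ∑ j, ‖((A ^ N).map Complex.ofReal) i j * x j‖ :=
          norm_sum_le _ _
      _ = ∑ j, (A ^ N) i j * ‖x j‖ := by
          refine Finset.sum_congr rfl fun j _ => ?_
          rw [norm_mul, Matrix.map_apply]
          simp [abs_of_nonneg (aux_pow_nonneg A h0 N i j)]
      _ ≤ ∑ j, (A ^ N) i j * ‖x i‖ := by
          refine Finset.sum_le_sum fun j _ =>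
            mul_le_mul_of_nonneg_left (hi j (Finset.mem_univ j)) (aux_pow_nonneg A h0 N i j)
      _ = (∑ j, (A ^ N) i j) * ‖x i‖ := by rw [Finset.sum_mul]
  have h3 : ‖μ‖ ^ N * ‖x i‖ < 1 * ‖x i‖ := by
    have := h2
    rw [h1, norm_mul, norm_pow] at this
    calc ‖μ‖ ^ N * ‖x i‖
        ≤ (∑ j, (A ^ N) i j) * ‖x i‖ := this
      _ < 1 * ‖x i‖ := by
          exact mul_lt_mul_of_pos_right (hN i) hxi
  have h4 : ‖μ‖ ^ N < 1 := lt_of_mul_lt_mul_right (by linarith) (le_of_lt hxi)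
  have hN0 : N ≠ 0 := by
    intro h
    have := hN (Classical.arbitrary V)
    rw [h, pow_zero] at this
    simp [Matrix.one_apply] at this
  exact (pow_lt_one_iff_of_nonneg (norm_nonneg _) hN0).mp h4

end Aux

/-- Friedkin–Johnsen opinion dynamics: if `W` is row-stochastic,
`Λ = I - diag(W)`, and in the graph associated to `W` every node has a
directed path to some node `i` with `W i i > 0`, then `ΛW` is Schur stable,
`I - ΛW` is invertible, and for every prejudice vector `v` the dynamics
`x(k+1) = ΛW x(k) + (I-Λ)v`, `x(0) = v`, converges to
`x′ = (I - ΛW)⁻¹ (I - Λ) v`. -/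
theorem stmt9 {V : Type*} [Fintype V] [DecidableEq V]
    (hV : 3 ≤ Fintype.card V)
    (W : Matrix V V ℝ)
    (hnonneg : ∀ i j, 0 ≤ W i j) (hrow : ∀ i, ∑ j, W i j = 1)
    (Λ : Matrix V V ℝ) (hΛ : Λ = 1 - Matrix.diagonal (fun i => W i i))
    (hpath : ∀ ℓ : V, ∃ i : V,
      Relation.ReflTransGen (fun a b => 0 < W a b) ℓ i ∧ 0 < W i i) :
    (∀ μ ∈ spectrum ℂ ((Λ * W).map Complex.ofReal), ‖μ‖ < 1) ∧
    IsUnit (1 - Λ * W) ∧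
    (∀ (v : V → ℝ) (x : ℕ → V → ℝ), x 0 = v →
      (∀ k, x (k + 1) = (Λ * W).mulVec (x k) + (1 - Λ).mulVec v) →
      Tendsto x atTop (nhds ((1 - Λ * W)⁻¹.mulVec ((1 - Λ).mulVec v)))) := by
  classical
  have hne : Nonempty V := Fintype.card_pos_iff.mp (by omega)
  set A := Λ * W with hAdef
  have hΛ' : Λ = Matrix.diagonal (fun i => 1 - W i i) := by
    rw [hΛ]
    ext i j
    by_cases h : i = j <;>
      simp [Matrix.diagonal_apply, Matrix.one_apply, Matrix.sub_apply, h]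
  have hA : ∀ i j, A i j = (1 - W i i) * W i j := by
    intro i j
    rw [hAdef, hΛ', Matrix.diagonal_mul]
  have hWle : ∀ i, W i i ≤ 1 := by
    intro i
    have := Finset.single_le_sum (f := fun j => W i j)
      (fun j _ => hnonneg i j) (Finset.mem_univ i)
    rw [hrow i] at this
    exact this
  have hA0 : ∀ i j, 0 ≤ A i j := fun i j => by
    rw [hA]; exact mul_nonneg (by linarith [hWle i]) (hnonneg i j)
  have hArow : ∀ i, ∑ j, A i j = 1 - W i i := by
    intro i
    simp only [hA]
    rw [← Finset.mul_sum, hrow i, mul_one]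
  have hA1 : ∀ i, ∑ j, A i j ≤ 1 := fun i => by
    rw [hArow]; linarith [hnonneg i i]
  -- existence of a power with all row sums < 1
  have hforall : ∀ ℓ : V, ∃ k : ℕ, ∑ j, (A ^ k) ℓ j < 1 := by
    intro ℓ
    obtain ⟨i, hp, hWii⟩ := hpath ℓ
    refine Relation.ReflTransGen.head_induction_on hp ?_ ?_
    · exact ⟨1, by rw [pow_one, hArow]; linarith⟩
    · intro a c h' _ ih
      by_cases hda : 0 < W a a
      · exact ⟨1, by rw [pow_one, hArow]; linarith⟩
      · have hdz : W a a = 0 := le_antisymm (not_lt.mp hda) (hnonneg a a)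
        obtain ⟨k, hk⟩ := ih
        refine ⟨k + 1, ?_⟩
        rw [aux_rowsum_succ]
        have hstrict : ∑ l, A a l * ∑ j, (A ^ k) l j < ∑ l, A a l * 1 := by
          refine Finset.sum_lt_sum (fun l _ =>
            mul_le_mul_of_nonneg_left (aux_rowsum_le_one A hA0 hA1 k l) (hA0 a l))
            ⟨c, Finset.mem_univ c, ?_⟩
          have hAac : 0 < A a c := by rw [hA, hdz]; simpa using h'
          exact mul_lt_mul_of_pos_left hk hAac
        calc ∑ l, A a l * ∑ j, (A ^ k) l j < ∑ l, A a l * 1 := hstrict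
          _ ≤ 1 := by simpa using hA1 a
  choose f hf using hforall
  set N := Finset.univ.sup f with hNdef
  have hN : ∀ i, ∑ j, (A ^ N) i j < 1 := by
    intro i
    have hle : f i ≤ N := Finset.le_sup (Finset.mem_univ i)
    exact lt_of_le_of_lt (aux_rowsum_anti A hA0 hA1 i hle) (hf i)
  have hN0 : N ≠ 0 := by
    intro h
    have := hN (Classical.arbitrary V)
    rw [h, pow_zero] at this
    simp [Matrix.one_apply] at this
  -- Part 1: Schur stability
  have part1 : ∀ μ ∈ spectrum ℂ (A.map Complex.ofReal), ‖μ‖ < 1 := by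
    intro μ hμ
    rw [spectrum.mem_iff] at hμ
    have hdet : (algebraMap ℂ (Matrix V V ℂ) μ - A.map Complex.ofReal).det = 0 := by
      by_contra h
      exact hμ ((Matrix.isUnit_iff_isUnit_det _).mpr (isUnit_iff_ne_zero.mpr h))
    obtain ⟨x, hx0, hxe⟩ := (Matrix.exists_mulVec_eq_zero_iff).mpr hdet
    have hBx : (A.map Complex.ofReal).mulVec x = μ • x := by
      have halg : algebraMap ℂ (Matrix V V ℂ) μ = μ • (1 : Matrix V V ℂ) :=
        Algebra.algebraMap_eq_smul_one μ
      rw [halg, Matrix.sub_mulVec, Matrix.smul_mulVec, Matrix.one_mulVec,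
        sub_eq_zero] at hxe
      exact hxe.symm
    exact aux_eig A hA0 N hN μ x hx0 hBx
  -- Part 2: invertibility of 1 - A
  have hdet1 : (1 - A).det ≠ 0 := by
    intro h
    have hmap : ((1 - A).map Complex.ofReal) = 1 - A.map Complex.ofReal := by
      have : (Complex.ofRealHom.mapMatrix : Matrix V V ℝ →+* Matrix V V ℂ) (1 - A)
          = 1 - (Complex.ofRealHom.mapMatrix : Matrix V V ℝ →+* Matrix V V ℂ) A := by
        rw [map_sub, _root_.map_one]
      exact this
    have hdetC : (1 - A.map Complex.ofReal).det = 0 := by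
      rw [← hmap]
      have hh : ((1 - A).map Complex.ofReal).det = Complex.ofRealHom ((1 - A).det) :=
        (RingHom.map_det Complex.ofRealHom (1 - A)).symm
      rw [hh, h, map_zero]
    obtain ⟨x, hx0, hxe⟩ := (Matrix.exists_mulVec_eq_zero_iff).mpr hdetC
    have hBx : (A.map Complex.ofReal).mulVec x = (1 : ℂ) • x := by
      rw [Matrix.sub_mulVec, Matrix.one_mulVec, sub_eq_zero] at hxe
      rw [one_smul]
      exact hxe.symm
    have := aux_eig A hA0 N hN 1 x hx0 hBx
    simp at this
  have part2 : IsUnit (1 - A) :=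
    (Matrix.isUnit_iff_isUnit_det _).mpr (isUnit_iff_ne_zero.mpr hdet1)
  refine ⟨part1, part2, ?_⟩
  -- Part 3: convergence of the dynamics
  intro v x hx0 hxrec
  set b := (1 - Λ).mulVec v with hbdef
  set xs := (1 - A)⁻¹.mulVec b with hxsdef
  have hxs : (1 - A).mulVec xs = b := by
    rw [hxsdef, Matrix.mulVec_mulVec, Matrix.mul_nonsing_inv _
      (isUnit_iff_ne_zero.mpr hdet1), Matrix.one_mulVec]
  have hxs' : A.mulVec xs + b = xs := by
    rw [Matrix.sub_mulVec, Matrix.one_mulVec] at hxs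
    rw [add_comm]
    exact (sub_eq_iff_eq_add.mp hxs).symm
  set e0 : V → ℝ := v - xs with he0
  have hk : ∀ k, x k = (A ^ k).mulVec e0 + xs := by
    intro k
    induction k with
    | zero => rw [hx0, pow_zero, Matrix.one_mulVec, he0]; funext i; simp
    | succ k ih =>
        rw [hxrec k, ih, Matrix.mulVec_add, add_assoc, hxs',
          Matrix.mulVec_mulVec, ← pow_succ']
  -- sup norm machinery
  have hune : (Finset.univ : Finset V).Nonempty := Finset.univ_nonempty
  set S : (V → ℝ) → ℝ := fun y => Finset.univ.sup' hune fun j => |y j| with hSdef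
  have hSle : ∀ (y : V → ℝ) (i : V), |y i| ≤ S y := fun y i =>
    Finset.le_sup' (fun j => |y j|) (Finset.mem_univ i)
  have hS0 : ∀ y : V → ℝ, 0 ≤ S y := fun y =>
    le_trans (abs_nonneg _) (hSle y (Classical.arbitrary V))
  have hbound : ∀ (m : ℕ) (y : V → ℝ) (i : V),
      |(A ^ m).mulVec y i| ≤ (∑ j, (A ^ m) i j) * S y := by
    intro m y i
    rw [Matrix.mulVec]
    calc |∑ j, (A ^ m) i j * y j| ≤ ∑ j, |(A ^ m) i j * y j| :=
          Finset.abs_sum_le_sum_abs _ _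
      _ = ∑ j, (A ^ m) i j * |y j| := by
          refine Finset.sum_congr rfl fun j _ => ?_
          rw [abs_mul, abs_of_nonneg (aux_pow_nonneg A hA0 m i j)]
      _ ≤ ∑ j, (A ^ m) i j * S y := Finset.sum_le_sum fun j _ =>
          mul_le_mul_of_nonneg_left (hSle y j) (aux_pow_nonneg A hA0 m i j)
      _ = (∑ j, (A ^ m) i j) * S y := by rw [Finset.sum_mul]
  have hSpow : ∀ (m : ℕ) (y : V → ℝ), S ((A ^ m).mulVec y) ≤ S y := by
    intro m y
    refine Finset.sup'_le hune (fun j => |(A ^ m).mulVec y j|) fun i _ => ?_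
    calc |(A ^ m).mulVec y i| ≤ (∑ j, (A ^ m) i j) * S y := hbound m y i
      _ ≤ 1 * S y := mul_le_mul_of_nonneg_right (aux_rowsum_le_one A hA0 hA1 m i) (hS0 y)
      _ = S y := one_mul _
  set c : ℝ := Finset.univ.sup' hune fun i => ∑ j, (A ^ N) i j with hcdef
  have hc0 : 0 ≤ c :=
    le_trans (aux_rowsum_nonneg A hA0 N (Classical.arbitrary V))
      (Finset.le_sup' (fun i => ∑ j, (A ^ N) i j) (Finset.mem_univ _))
  have hc1 : c < 1 :=
    (Finset.sup'_lt_iff (f := fun i => ∑ j, (A ^ N) i j) hune).mpr fun i _ => hN i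
  have hSN : ∀ y : V → ℝ, S ((A ^ N).mulVec y) ≤ c * S y := by
    intro y
    refine Finset.sup'_le hune (fun j => |(A ^ N).mulVec y j|) fun i _ => ?_
    calc |(A ^ N).mulVec y i| ≤ (∑ j, (A ^ N) i j) * S y := hbound N y i
      _ ≤ c * S y := mul_le_mul_of_nonneg_right
          (Finset.le_sup' (fun i => ∑ j, (A ^ N) i j) (Finset.mem_univ i)) (hS0 y)
  have hSq : ∀ (q : ℕ) (y : V → ℝ), S ((A ^ (N * q)).mulVec y) ≤ c ^ q * S y := by
    intro q
    induction q with
    | zero => intro y; simp [Matrix.one_mulVec]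
    | succ q ih =>
        intro y
        have : A ^ (N * (q + 1)) = A ^ (N * q) * A ^ N := by
          rw [← pow_add]; ring_nf
        rw [this, ← Matrix.mulVec_mulVec]
        calc S ((A ^ (N * q)).mulVec ((A ^ N).mulVec y))
            ≤ c ^ q * S ((A ^ N).mulVec y) := ih _
          _ ≤ c ^ q * (c * S y) := mul_le_mul_of_nonneg_left (hSN y) (pow_nonneg hc0 q)
          _ = c ^ (q + 1) * S y := by ring
  have hSk : ∀ k : ℕ, S ((A ^ k).mulVec e0) ≤ c ^ (k / N) * S e0 := by
    intro k
    have hdm : N * (k / N) + k % N = k := Nat.div_add_mod k N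
    have hsplit : A ^ k = A ^ (N * (k / N)) * A ^ (k % N) := by
      rw [← pow_add, hdm]
    rw [hsplit, ← Matrix.mulVec_mulVec]
    calc S ((A ^ (N * (k / N))).mulVec ((A ^ (k % N)).mulVec e0))
        ≤ c ^ (k / N) * S ((A ^ (k % N)).mulVec e0) := hSq _ _
      _ ≤ c ^ (k / N) * S e0 :=
          mul_le_mul_of_nonneg_left (hSpow _ _) (pow_nonneg hc0 _)
  -- final convergence
  rw [tendsto_pi_nhds]
  intro i
  have hgto : Tendsto (fun k : ℕ => c ^ (k / N) * S e0) atTop (nhds 0) := by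
    have h1 : Tendsto (fun k : ℕ => c ^ (k / N)) atTop (nhds 0) :=
      (tendsto_pow_atTop_nhds_zero_of_lt_one hc0 hc1).comp
        (Nat.tendsto_div_const_atTop hN0)
    simpa using h1.mul_const (S e0)
  have habs : Tendsto (fun k => |x k i - xs i|) atTop (nhds 0) := by
    refine squeeze_zero (fun k => abs_nonneg _) (fun k => ?_) hgto
    have : x k i - xs i = (A ^ k).mulVec e0 i := by
      rw [hk k]; simp
    rw [this]
    exact le_trans (hSle _ i) (hSk k)
  have h5 : Tendsto (fun k => x k i - xs i) atTop (nhds 0) :=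
    (tendsto_zero_iff_abs_tendsto_zero _).mpr habs
  have h6 := h5.add_const (xs i)
  simpa using h6
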